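/- Fix real numbers 0 ≤ λ1 < λ2 < 1. For all Φ1, Φ2, θ ∈ ℝ, all β0, β1 ∈ 𝔻, and every positive integer t, writing E_j = E_{Φ_j,θ,β0,β1}, one has ‖E_1^t δ_0 − E_2^t δ_0‖ ≤ 2π·λ2·|Φ1 − Φ2|·Σ_{s=0}^{t−1} ‖X E_2^s δ_0‖. -/

import Mathlib

open scoped ENNReal ComplexConjugate Classical
open Filter MeasureTheory

noncomputable section

abbrev l2Z : Type := lp (fun _ : ℤ => ℂ) 2

/-- The standard basis vector `δ_n` of `ℓ²(ℤ)`. -/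
def deltaVec (n : ℤ) : l2Z := lp.single 2 n 1

/-- Membership in the domain of the position operator `X`. -/
def InDomX (ψ : l2Z) : Prop := Memℓp (fun n : ℤ => (n : ℂ) * ψ n) 2

/-- The position operator `X`, defined (with junk value `0` off its domain). -/
def posX (ψ : l2Z) : l2Z :=
  if h : InDomX ψ then (⟨fun n : ℤ => (n : ℂ) * ψ n, h⟩ : l2Z) else 0

/-- `‖X ψ‖²`, computed as an extended real (possibly `+∞`). -/
def XnormSq (ψ : l2Z) : ℝ≥0∞ := ∑' n : ℤ, ENNReal.ofReal ((n : ℝ) ^ 2 * ‖ψ n‖ ^ 2)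

/-- `ρ_n = √(1 - |α_n|²)`. -/
def cmvRho (α : ℤ → ℂ) (n : ℤ) : ℝ := Real.sqrt (1 - ‖α n‖ ^ 2)

/-- The pointwise action of `M = ⊕ₙ Θ(α_{2n+1})` (blocks acting on the pairs
`{2n+1, 2n+2}`): a block `Θ(α_j)` acts on `span{δ_j, δ_{j+1}}` by the matrix
`[[conj α_j, ρ_j], [ρ_j, -α_j]]`. -/
def cmvMApply (α : ℤ → ℂ) (ψ : ℤ → ℂ) : ℤ → ℂ := fun n =>
  if Odd n then conj (α n) * ψ n + (cmvRho α n : ℂ) * ψ (n + 1)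
  else (cmvRho α (n - 1) : ℂ) * ψ (n - 1) - α (n - 1) * ψ n

/-- The pointwise action of `L = ⊕ₙ Θ(α_{2n})` (blocks acting on the pairs `{2n, 2n+1}`). -/
def cmvLApply (α : ℤ → ℂ) (ψ : ℤ → ℂ) : ℤ → ℂ := fun n =>
  if Even n then conj (α n) * ψ n + (cmvRho α n : ℂ) * ψ (n + 1)
  else (cmvRho α (n - 1) : ℂ) * ψ (n - 1) - α (n - 1) * ψ n

/-- `E` is the extended CMV matrix with Verblunsky coefficients `α`: a unitary operator on
`ℓ²(ℤ)` acting pointwise as `E = L M`. -/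
def IsECMV (α : ℤ → ℂ) (E : l2Z →L[ℂ] l2Z) : Prop :=
  E ∈ unitary (l2Z →L[ℂ] l2Z) ∧
    ∀ ψ : l2Z, ∀ n : ℤ, (E ψ) n = cmvLApply α (cmvMApply α (fun m => ψ m)) n

/-- The Verblunsky coefficients of the (locally perturbed) unitary almost-Mathieu operator:
`α₀ = β₀`, `α₁ = β₁`, `α_{2n-1} = λ₂ sin(2π(nΦ+θ))` for `n ≠ 1`, and `α_{2n} = √(1-λ₁²)`
for `n ≠ 0`. -/
def uamoAlpha (lam1 lam2 Phi theta : ℝ) (beta0 beta1 : ℂ) : ℤ → ℂ := fun n =>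
  if n = 0 then beta0
  else if n = 1 then beta1
  else if Odd n then
    ((lam2 * Real.sin (2 * Real.pi * ((((n + 1) / 2 : ℤ) : ℝ) * Phi + theta)) : ℝ) : ℂ)
  else ((Real.sqrt (1 - lam1 ^ 2) : ℝ) : ℂ)

/-! ### Auxiliary lemmas -/

section Aux

open Complex

lemma aux_normsq_mk (a b : ℝ) : ‖(a:ℂ) + I * b‖^2 = a^2 + b^2 := by
  simp only [Complex.sq_norm, Complex.normSq_apply, Complex.add_re,
    Complex.add_im, Complex.mul_re, Complex.mul_im, Complex.I_re, Complex.I_im,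
    Complex.ofReal_re, Complex.ofReal_im]
  ring

lemma aux_two_block (a : ℂ) (r : ℝ) (hr : r^2 = 1 - ‖a‖^2) (x y : ℂ) :
    ‖conj a * x + (r:ℂ) * y‖^2 + ‖(r:ℂ) * x - a * y‖^2 = ‖x‖^2 + ‖y‖^2 := by
  have ha : ‖a‖^2 = a.re^2 + a.im^2 := by
    rw [Complex.sq_norm, Complex.normSq_apply]; ring
  simp only [Complex.sq_norm, Complex.normSq_apply, Complex.add_re,
    Complex.add_im, Complex.sub_re, Complex.sub_im, Complex.mul_re, Complex.mul_im,
    Complex.conj_re, Complex.conj_im, Complex.ofReal_re, Complex.ofReal_im]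
  rw [ha] at hr
  nlinarith [hr]

lemma aux_two_block_real (a r : ℝ) (x y : ℂ) :
    ‖(a:ℂ) * x + (r:ℂ) * y‖^2 + ‖(r:ℂ) * x - (a:ℂ) * y‖^2 = (a^2+r^2) * (‖x‖^2 + ‖y‖^2) := by
  simp only [Complex.sq_norm, Complex.normSq_apply, Complex.add_re,
    Complex.add_im, Complex.sub_re, Complex.sub_im, Complex.mul_re, Complex.mul_im,
    Complex.ofReal_re, Complex.ofReal_im]
  ring

lemma aux_lip_est (lam : ℝ) (h0 : 0 ≤ lam) (h1 : lam < 1) (x y : ℝ) :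
    (lam * Real.sin x - lam * Real.sin y)^2 +
      (Real.sqrt (1 - (lam * Real.sin x)^2) - Real.sqrt (1 - (lam * Real.sin y)^2))^2
      ≤ lam^2 * (x - y)^2 := by
  set g : ℝ → ℂ := fun u => ((lam * Real.sin u : ℝ) : ℂ)
      + I * ((Real.sqrt (1 - (lam * Real.sin u)^2) : ℝ) : ℂ) with hg
  set g' : ℝ → ℂ := fun u => ((lam * Real.cos u : ℝ) : ℂ) + I *
        ((-(2 * (lam * Real.sin u) * (lam * Real.cos u)) /
          (2 * Real.sqrt (1 - (lam * Real.sin u)^2)) : ℝ) : ℂ) with hg'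
  have hq : ∀ u : ℝ, 0 < 1 - (lam * Real.sin u)^2 := by
    intro u
    have hl2 : lam^2 < 1 := by nlinarith
    have : (lam*Real.sin u)^2 ≤ lam^2 := by
      rw [mul_pow]; nlinarith [Real.sin_sq_le_one u, sq_nonneg lam]
    linarith
  have hder : ∀ u : ℝ, HasDerivAt g (g' u) u := by
    intro u
    have h1' : HasDerivAt (fun v => lam * Real.sin v) (lam * Real.cos u) u :=
      (Real.hasDerivAt_sin u).const_mul lam
    have h2' : HasDerivAt (fun v => 1 - (lam * Real.sin v)^2)
        (-(2 * (lam * Real.sin u) * (lam * Real.cos u))) u := by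
      have : HasDerivAt (fun v => 1 - (lam * Real.sin v)^2)
          (-(((2:ℕ):ℝ) * (lam * Real.sin u) ^ (2 - 1) * (lam * Real.cos u))) u :=
        (h1'.pow 2).const_sub 1
      convert this using 1
      ring
    have h3' := h2'.sqrt (hq u).ne'
    exact (h1'.ofReal_comp).add ((h3'.ofReal_comp).const_mul I)
  have hbound : ∀ u : ℝ, ‖g' u‖ ≤ lam := by
    intro u
    have hq' := hq u
    have hsq : Real.sqrt (1 - (lam * Real.sin u)^2) ^ 2 = 1 - (lam * Real.sin u)^2 :=
      Real.sq_sqrt hq'.le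
    have hpos : 0 < Real.sqrt (1 - (lam * Real.sin u)^2) := Real.sqrt_pos.mpr hq'
    have hb : ‖g' u‖^2 ≤ lam^2 := by
      rw [hg', aux_normsq_mk, div_pow]
      have hD : (2 * Real.sqrt (1 - (lam * Real.sin u)^2))^2
          = 4 * (1 - (lam * Real.sin u)^2) := by
        rw [mul_pow, hsq]; ring
      rw [hD]
      have hl2 : (0:ℝ) ≤ 1 - lam^2 := by nlinarith
      have hkey : (-(2 * (lam * Real.sin u) * (lam * Real.cos u)))^2
            / (4 * (1 - (lam*Real.sin u)^2))
          ≤ lam^2 - (lam * Real.cos u)^2 := by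
        rw [div_le_iff₀ (by positivity)]
        nlinarith [Real.sin_sq_add_cos_sq u,
          mul_nonneg (sq_nonneg (lam * Real.sin u)) hl2]
      linarith
    calc ‖g' u‖ = Real.sqrt (‖g' u‖^2) := (Real.sqrt_sq (norm_nonneg _)).symm
      _ ≤ Real.sqrt (lam^2) := Real.sqrt_le_sqrt hb
      _ = lam := Real.sqrt_sq h0
  have hlip := Convex.norm_image_sub_le_of_norm_deriv_le (s := Set.univ)
    (fun u _ => (hder u).differentiableAt)
    (fun u _ => by rw [(hder u).deriv]; exact hbound u) convex_univ (Set.mem_univ y)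
    (Set.mem_univ x)
  have h2 : ‖g x - g y‖^2 ≤ (lam * ‖x - y‖)^2 :=
    pow_le_pow_left₀ (norm_nonneg _) hlip 2
  calc (lam * Real.sin x - lam * Real.sin y)^2 +
      (Real.sqrt (1 - (lam * Real.sin x)^2) - Real.sqrt (1 - (lam * Real.sin y)^2))^2
      = ‖g x - g y‖^2 := by
        rw [hg]
        rw [show ((lam * Real.sin x : ℝ) : ℂ)
              + I * ((Real.sqrt (1 - (lam * Real.sin x)^2) : ℝ):ℂ)
            - (((lam * Real.sin y : ℝ) : ℂ)
              + I * ((Real.sqrt (1 - (lam * Real.sin y)^2) : ℝ):ℂ))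
            = ((lam * Real.sin x - lam * Real.sin y : ℝ) : ℂ)
              + I * ((Real.sqrt (1 - (lam * Real.sin x)^2)
                - Real.sqrt (1 - (lam * Real.sin y)^2) : ℝ) : ℂ) by
          push_cast; ring]
        rw [aux_normsq_mk]
    _ ≤ (lam * ‖x - y‖)^2 := h2
    _ = lam^2 * (x-y)^2 := by rw [Real.norm_eq_abs, mul_pow, _root_.sq_abs]

lemma aux_pair_tsum (g : ℤ → ℝ) (hg : Summable g) :
    ∑' m : ℤ, g m = ∑' k : ℤ, (g (2*k) + g (2*k+1)) := by
  have he := ((Int.divModEquiv 2).symm.tsum_eq g).symm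
  rw [he]
  have hs : Summable fun p : ℤ × Fin 2 => g ((Int.divModEquiv 2).symm p) :=
    (Int.divModEquiv 2).symm.summable_iff.mpr hg
  rw [Summable.tsum_prod hs]
  congr 1
  ext k
  rw [show ∑' (i : Fin 2), g ((Int.divModEquiv 2).symm (k, i)) =
      ∑ i : Fin 2, g ((Int.divModEquiv 2).symm (k, i)) from tsum_fintype _]
  rw [Fin.sum_univ_two]
  simp [Int.divModEquiv]
  rw [mul_comm]

lemma aux_pair_tsum_shift (g : ℤ → ℝ) (hg : Summable g) :
    ∑' m : ℤ, g m = ∑' k : ℤ, (g (2*k+1) + g (2*k+2)) := by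
  have h1 : Summable fun m : ℤ => g (m+1) := by
    have : (fun m : ℤ => g (m+1)) = g ∘ (Equiv.addRight (1:ℤ)) := rfl
    rw [this, Equiv.summable_iff]
    exact hg
  have h2 := aux_pair_tsum (fun m => g (m+1)) h1
  have h3 : ∑' m : ℤ, g (m+1) = ∑' m : ℤ, g m := (Equiv.addRight (1:ℤ)).tsum_eq g
  rw [← h3, h2]
  have e2 : ∀ k : ℤ, 2*k+1+1 = 2*k+2 := fun k => by ring
  apply tsum_congr
  intro k
  simp only [e2]

/-- Finite support predicate. -/
def SuppIn (R : ℤ) (f : ℤ → ℂ) : Prop := ∀ n : ℤ, R < |n| → f n = 0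

lemma aux_summable_of_suppIn {f : ℤ → ℝ} (R : ℤ) (h : ∀ m : ℤ, R < |m| → f m = 0) :
    Summable f := by
  apply summable_of_ne_finset_zero (s := Finset.Icc (-R) R)
  intro m hm
  apply h
  simp only [Finset.mem_Icc] at hm
  simp only [Int.abs_eq_natAbs]
  omega

lemma aux_norm_sq_eq (ψ : l2Z) : ‖ψ‖^2 = ∑' n : ℤ, ‖ψ n‖^2 := by
  have h := lp.norm_rpow_eq_tsum (p := 2) (by norm_num) ψ
  have h2 : ((2:ℝ≥0∞)).toReal = (2:ℝ) := by norm_num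
  rw [h2] at h
  rw [show ((2:ℝ)) = ((2:ℕ):ℝ) by norm_num] at h
  simpa [Real.rpow_natCast] using h

lemma aux_sq1 (k : ℤ) : ((k:ℝ)+1)^2 ≤ ((2*k+1 : ℤ):ℝ)^2 := by
  push_cast
  rcases le_or_gt 0 k with hk0 | hk0
  · have h : (0:ℝ) ≤ (k:ℝ) := by exact_mod_cast hk0
    nlinarith
  · have hk1 : k ≤ -1 := by omega
    have h : (k:ℝ) ≤ -1 := by exact_mod_cast hk1
    nlinarith

lemma aux_sq2 (k : ℤ) : ((k:ℝ)+1)^2 ≤ ((2*k+2 : ℤ):ℝ)^2 := by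
  push_cast
  nlinarith [sq_nonneg ((k:ℝ)+1)]

lemma aux_norm_le_of_sq_le {a b : ℝ} (hb : 0 ≤ b) (h : a^2 ≤ b^2) (ha : 0 ≤ a) : a ≤ b := by
  nlinarith

end Aux

/-! ### Support lemmas -/

section Supp

lemma suppIn_mono {R R' : ℤ} (h : R ≤ R') {f : ℤ → ℂ} (hf : SuppIn R f) : SuppIn R' f :=
  fun n hn => hf n (by simp only [Int.abs_eq_natAbs] at hn ⊢; omega)

lemma suppIn_M (α : ℤ → ℂ) {R : ℤ} {f : ℤ → ℂ} (hf : SuppIn R f) :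
    SuppIn (R+1) (cmvMApply α f) := by
  intro n hn
  unfold cmvMApply
  have h1 : f n = 0 := hf n (by simp only [Int.abs_eq_natAbs] at hn ⊢; omega)
  have h2 : f (n+1) = 0 := hf (n+1) (by simp only [Int.abs_eq_natAbs] at hn ⊢; omega)
  have h3 : f (n-1) = 0 := hf (n-1) (by simp only [Int.abs_eq_natAbs] at hn ⊢; omega)
  split_ifs <;> simp [h1, h2, h3]

lemma suppIn_L (α : ℤ → ℂ) {R : ℤ} {f : ℤ → ℂ} (hf : SuppIn R f) :
    SuppIn (R+1) (cmvLApply α f) := by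
  intro n hn
  unfold cmvLApply
  have h1 : f n = 0 := hf n (by simp only [Int.abs_eq_natAbs] at hn ⊢; omega)
  have h2 : f (n+1) = 0 := hf (n+1) (by simp only [Int.abs_eq_natAbs] at hn ⊢; omega)
  have h3 : f (n-1) = 0 := hf (n-1) (by simp only [Int.abs_eq_natAbs] at hn ⊢; omega)
  split_ifs <;> simp [h1, h2, h3]

lemma suppIn_delta : SuppIn 0 (fun m => (deltaVec 0) m) := by
  intro n hn
  have : n ≠ 0 := by simp only [Int.abs_eq_natAbs] at hn; omega
  exact lp.single_apply_ne 2 0 _ this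

lemma suppIn_E {α : ℤ → ℂ} {E : l2Z →L[ℂ] l2Z} (hE : IsECMV α E) {R : ℤ} {ψ : l2Z}
    (hψ : SuppIn R (fun m => ψ m)) : SuppIn (R+2) (fun m => (E ψ) m) := by
  intro n hn
  show (E ψ) n = 0
  rw [hE.2 ψ n]
  have := suppIn_L α (suppIn_M α hψ)
  exact this n (by simp only [Int.abs_eq_natAbs] at hn ⊢; omega)

lemma suppIn_pow {α : ℤ → ℂ} {E : l2Z →L[ℂ] l2Z} (hE : IsECMV α E) (s : ℕ) :
    SuppIn (2*s) (fun m => ((E ^ s) (deltaVec 0)) m) := by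
  induction s with
  | zero => simpa using suppIn_delta
  | succ s ih =>
      have h1 : (E ^ (s+1)) (deltaVec 0) = E ((E ^ s) (deltaVec 0)) := by
        rw [pow_succ', ContinuousLinearMap.mul_apply]
      rw [h1]
      have := suppIn_E hE ih
      exact suppIn_mono (by omega) this

lemma indom_of_suppIn {R : ℤ} {ψ : l2Z} (h : SuppIn R (fun m => ψ m)) : InDomX ψ := by
  apply memℓp_gen
  apply summable_of_ne_finset_zero (s := Finset.Icc (-R) R)
  intro m hm
  have hz : ψ m = 0 := by
    apply h
    simp only [Finset.mem_Icc] at hm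
    simp only [Int.abs_eq_natAbs]
    omega
  rw [hz]
  simp only [mul_zero, norm_zero]
  rw [Real.zero_rpow]
  simp

lemma posX_apply {ψ : l2Z} (h : InDomX ψ) (n : ℤ) : (posX ψ) n = (n:ℂ) * ψ n := by
  rw [posX, dif_pos h]

lemma posX_norm_sq {ψ : l2Z} (h : InDomX ψ) :
    ‖posX ψ‖^2 = ∑' m : ℤ, (m:ℝ)^2 * ‖ψ m‖^2 := by
  rw [aux_norm_sq_eq]
  apply tsum_congr
  intro m
  rw [posX_apply h m, norm_mul]
  have hm : ‖((m:ℤ):ℂ)‖ = |(m:ℝ)| := by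
    rw [show ((m:ℤ):ℂ) = (((m:ℤ):ℝ):ℂ) by push_cast; ring, Complex.norm_real, Real.norm_eq_abs]
  rw [hm, mul_pow, _root_.sq_abs]

end Supp


/-! ### Properties of the UAMO Verblunsky coefficients -/

section UAMO

open Complex

variable (lam1 lam2 Phi1 Phi2 Phi theta : ℝ) (beta0 beta1 : ℂ)

lemma uamo_odd {n : ℤ} (hodd : Odd n) (hn1 : n ≠ 1) :
    uamoAlpha lam1 lam2 Phi theta beta0 beta1 n
      = ((lam2 * Real.sin (2 * Real.pi * ((((n + 1) / 2 : ℤ) : ℝ) * Phi + theta)) : ℝ) : ℂ) := by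
  have h0 : n ≠ 0 := by
    rw [Int.odd_iff] at hodd
    omega
  unfold uamoAlpha
  rw [if_neg h0, if_neg hn1, if_pos hodd]

lemma uamo_one : uamoAlpha lam1 lam2 Phi theta beta0 beta1 1 = beta1 := by
  unfold uamoAlpha
  norm_num

lemma uamo_even_eq {n : ℤ} (hn : ¬ Odd n) :
    uamoAlpha lam1 lam2 Phi1 theta beta0 beta1 n
      = uamoAlpha lam1 lam2 Phi2 theta beta0 beta1 n := by
  have h1 : n ≠ 1 := by rintro rfl; exact hn odd_one
  unfold uamoAlpha
  by_cases h0 : n = 0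
  · subst h0; simp
  · rw [if_neg h0, if_neg h1, if_neg hn, if_neg h0, if_neg h1, if_neg hn]

lemma uamo_even_norm (h1 : 0 ≤ lam1) (hb0 : ‖beta0‖ < 1) {n : ℤ} (hn : ¬ Odd n) :
    ‖uamoAlpha lam1 lam2 Phi theta beta0 beta1 n‖ ≤ 1 := by
  have h1' : n ≠ 1 := by rintro rfl; exact hn odd_one
  unfold uamoAlpha
  by_cases h0 : n = 0
  · subst h0; simpa using hb0.le
  · rw [if_neg h0, if_neg h1', if_neg hn]
    rw [Complex.norm_real, Real.norm_eq_abs, _root_.abs_of_nonneg (Real.sqrt_nonneg _)]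
    calc Real.sqrt (1 - lam1^2) ≤ Real.sqrt 1 := Real.sqrt_le_sqrt (by nlinarith [sq_nonneg lam1])
      _ = 1 := Real.sqrt_one

lemma uamo_rho_sq (h1 : 0 ≤ lam1) (hb0 : ‖beta0‖ < 1) {n : ℤ} (hn : ¬ Odd n) :
    (cmvRho (uamoAlpha lam1 lam2 Phi theta beta0 beta1) n)^2
      = 1 - ‖uamoAlpha lam1 lam2 Phi theta beta0 beta1 n‖^2 := by
  unfold cmvRho
  apply Real.sq_sqrt
  nlinarith [uamo_even_norm lam1 lam2 Phi theta beta0 beta1 h1 hb0 hn,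
    norm_nonneg (uamoAlpha lam1 lam2 Phi theta beta0 beta1 n)]

lemma uamo_rho_even_eq {n : ℤ} (hn : ¬ Odd n) :
    cmvRho (uamoAlpha lam1 lam2 Phi1 theta beta0 beta1) n
      = cmvRho (uamoAlpha lam1 lam2 Phi2 theta beta0 beta1) n := by
  unfold cmvRho
  rw [uamo_even_eq lam1 lam2 Phi1 Phi2 theta beta0 beta1 hn]

lemma uamo_L_eq (f : ℤ → ℂ) (n : ℤ) :
    cmvLApply (uamoAlpha lam1 lam2 Phi1 theta beta0 beta1) f n
      = cmvLApply (uamoAlpha lam1 lam2 Phi2 theta beta0 beta1) f n := by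
  unfold cmvLApply
  by_cases h : Even n
  · have hn : ¬ Odd n := by rw [Int.even_iff] at h; rw [Int.odd_iff]; omega
    rw [if_pos h, if_pos h, uamo_even_eq lam1 lam2 Phi1 Phi2 theta beta0 beta1 hn,
      uamo_rho_even_eq lam1 lam2 Phi1 Phi2 theta beta0 beta1 hn]
  · have hn : ¬ Odd (n - 1) := by
      rw [Int.even_iff] at h; rw [Int.odd_iff]; omega
    rw [if_neg h, if_neg h, uamo_even_eq lam1 lam2 Phi1 Phi2 theta beta0 beta1 hn,
      uamo_rho_even_eq lam1 lam2 Phi1 Phi2 theta beta0 beta1 hn]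

end UAMO

/-! ### The one-step perturbation bound -/

section StepBound

open Complex

set_option maxHeartbeats 1600000 in
lemma step_bound
    (lam1 lam2 : ℝ) (h1 : 0 ≤ lam1) (h12 : lam1 < lam2) (h2 : lam2 < 1)
    (Phi1 Phi2 theta : ℝ) (beta0 beta1 : ℂ) (hb0 : ‖beta0‖ < 1) (hb1 : ‖beta1‖ < 1)
    (E1 E2 : l2Z →L[ℂ] l2Z)
    (hE1 : IsECMV (uamoAlpha lam1 lam2 Phi1 theta beta0 beta1) E1)
    (hE2 : IsECMV (uamoAlpha lam1 lam2 Phi2 theta beta0 beta1) E2)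
    (ψ : l2Z) (R : ℤ) (hs : SuppIn R (fun m => ψ m)) :
    ‖E1 ψ - E2 ψ‖ ≤ 2 * Real.pi * lam2 * |Phi1 - Phi2| * ‖posX ψ‖ := by
  set α1 : ℤ → ℂ := uamoAlpha lam1 lam2 Phi1 theta beta0 beta1 with hα1
  set α2 : ℤ → ℂ := uamoAlpha lam1 lam2 Phi2 theta beta0 beta1 with hα2
  set C : ℝ := 2 * Real.pi * lam2 * |Phi1 - Phi2| with hCdef
  have hl2pos : 0 ≤ lam2 := le_trans h1 h12.le
  have hC : 0 ≤ C := by rw [hCdef]; positivity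
  set ψf : ℤ → ℂ := fun m => ψ m with hψf
  set φ : ℤ → ℂ := fun m => cmvMApply α1 ψf m - cmvMApply α2 ψf m with hφdef
  -- support facts
  have hsφ : SuppIn (R+1) φ := by
    intro n hn
    rw [hφdef]
    simp only
    rw [suppIn_M α1 hs n hn, suppIn_M α2 hs n hn, sub_zero]
  have hsL : SuppIn (R+2) (cmvLApply α2 φ) := by
    have := suppIn_L α2 hsφ
    exact suppIn_mono (by omega) this
  -- pointwise identity
  have hpt : ∀ m : ℤ, (E1 ψ - E2 ψ) m = cmvLApply α2 φ m := by
    intro m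
    have hsub : (E1 ψ - E2 ψ) m = (E1 ψ) m - (E2 ψ) m := by
      rw [lp.coeFn_sub]; rfl
    rw [hsub, hE1.2 ψ m, hE2.2 ψ m,
      uamo_L_eq lam1 lam2 Phi1 Phi2 theta beta0 beta1 _ m]
    unfold cmvLApply
    split_ifs with h
    · rw [hφdef]; simp only; ring
    · rw [hφdef]; simp only; ring
  -- squared norm
  have hnormsq : ‖E1 ψ - E2 ψ‖^2 = ∑' m : ℤ, ‖cmvLApply α2 φ m‖^2 := by
    rw [aux_norm_sq_eq]
    exact tsum_congr (fun m => by rw [hpt m])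
  -- summabilities
  have sL : Summable (fun m : ℤ => ‖cmvLApply α2 φ m‖^2) :=
    aux_summable_of_suppIn (R+2) (fun m hm => by rw [hsL m hm]; simp)
  have sφ : Summable (fun m : ℤ => ‖φ m‖^2) :=
    aux_summable_of_suppIn (R+1) (fun m hm => by rw [hsφ m hm]; simp)
  have sψX : Summable (fun m : ℤ => (m:ℝ)^2 * ‖ψ m‖^2) := by
    apply aux_summable_of_suppIn R
    intro m hm
    have hz : ψ m = 0 := hs m hm
    rw [hz]; simp
  -- L isometry
  have hLiso : ∑' m : ℤ, ‖cmvLApply α2 φ m‖^2 = ∑' m : ℤ, ‖φ m‖^2 := by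
    rw [aux_pair_tsum _ sL, aux_pair_tsum _ sφ]
    apply tsum_congr
    intro k
    have hek : Even (2*k) := ⟨k, by ring⟩
    have hok : ¬ Even (2*k+1) := by rw [Int.even_iff] at *; omega
    have hnodd : ¬ Odd (2*k) := by rw [Int.odd_iff]; omega
    unfold cmvLApply
    rw [if_pos hek, if_neg hok, show (2*k+1) - 1 = 2*k by ring]
    exact aux_two_block (α2 (2*k)) (cmvRho α2 (2*k))
      (uamo_rho_sq lam1 lam2 Phi2 theta beta0 beta1 h1 hb0 hnodd) (φ (2*k)) (φ (2*k+1))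
  -- block bound
  have hblock : ∀ k : ℤ, ‖φ (2*k+1)‖^2 + ‖φ (2*k+2)‖^2 ≤
      C^2 * (((2*k+1 : ℤ):ℝ)^2 * ‖ψ (2*k+1)‖^2 + ((2*k+2 : ℤ):ℝ)^2 * ‖ψ (2*k+2)‖^2) := by
    intro k
    have hodd : Odd (2*k+1) := ⟨k, by ring⟩
    have hnotodd : ¬ Odd (2*k+2) := by rw [Int.odd_iff] at *; omega
    have hφ1 : φ (2*k+1) = (conj (α1 (2*k+1)) - conj (α2 (2*k+1))) * ψf (2*k+1)
        + (((cmvRho α1 (2*k+1) - cmvRho α2 (2*k+1) : ℝ)) : ℂ) * ψf (2*k+2) := by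
      rw [hφdef]
      simp only
      unfold cmvMApply
      rw [if_pos hodd, if_pos hodd, show (2*k+1)+1 = 2*k+2 by ring]
      push_cast
      ring
    have hφ2 : φ (2*k+2) = (((cmvRho α1 (2*k+1) - cmvRho α2 (2*k+1) : ℝ)) : ℂ) * ψf (2*k+1)
        - (α1 (2*k+1) - α2 (2*k+1)) * ψf (2*k+2) := by
      rw [hφdef]
      simp only
      unfold cmvMApply
      rw [if_neg hnotodd, if_neg hnotodd, show (2*k+2) - 1 = 2*k+1 by ring]
      push_cast
      ring
    by_cases hk : k = 0
    · subst hk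
      norm_num at hφ1 hφ2 ⊢
      rw [hα1, hα2] at hφ1 hφ2
      rw [uamo_one, uamo_one,
        show cmvRho (uamoAlpha lam1 lam2 Phi1 theta beta0 beta1) 1
          = cmvRho (uamoAlpha lam1 lam2 Phi2 theta beta0 beta1) 1 by
            unfold cmvRho; rw [uamo_one, uamo_one]] at hφ1 hφ2
      simp only [sub_self, Complex.ofReal_zero, zero_mul, mul_zero, add_zero, zero_sub,
        map_zero, neg_zero] at hφ1 hφ2
      rw [hφ1, hφ2]
      simp only [norm_zero]
      norm_num
      positivity
    · have hne1 : (2*k+1 : ℤ) ≠ 1 := by omega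
      set K : ℝ := ((k:ℝ) + 1) with hK
      set x1 : ℝ := 2 * Real.pi * (K * Phi1 + theta) with hx1
      set x2 : ℝ := 2 * Real.pi * (K * Phi2 + theta) with hx2
      have hdiv : (((2*k+1 : ℤ) + 1) / 2 : ℤ) = k + 1 := by omega
      have ha1 : α1 (2*k+1) = ((lam2 * Real.sin x1 : ℝ) : ℂ) := by
        rw [hα1, uamo_odd lam1 lam2 Phi1 theta beta0 beta1 hodd hne1, hdiv, hx1, hK]
        push_cast
        ring_nf
      have ha2 : α2 (2*k+1) = ((lam2 * Real.sin x2 : ℝ) : ℂ) := by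
        rw [hα2, uamo_odd lam1 lam2 Phi2 theta beta0 beta1 hodd hne1, hdiv, hx2, hK]
        push_cast
        ring_nf
      have hr1 : cmvRho α1 (2*k+1) = Real.sqrt (1 - (lam2 * Real.sin x1)^2) := by
        unfold cmvRho
        rw [ha1, Complex.norm_real, Real.norm_eq_abs, _root_.sq_abs]
      have hr2 : cmvRho α2 (2*k+1) = Real.sqrt (1 - (lam2 * Real.sin x2)^2) := by
        unfold cmvRho
        rw [ha2, Complex.norm_real, Real.norm_eq_abs, _root_.sq_abs]
      set a : ℝ := lam2 * Real.sin x1 - lam2 * Real.sin x2 with ha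
      set r : ℝ := Real.sqrt (1 - (lam2 * Real.sin x1)^2)
        - Real.sqrt (1 - (lam2 * Real.sin x2)^2) with hr
      have hφ1' : φ (2*k+1) = (a:ℂ) * ψf (2*k+1) + (r:ℂ) * ψf (2*k+2) := by
        rw [hφ1, ha1, ha2, hr1, hr2, Complex.conj_ofReal, Complex.conj_ofReal, ha, hr]
        push_cast
        ring
      have hφ2' : φ (2*k+2) = (r:ℂ) * ψf (2*k+1) - (a:ℂ) * ψf (2*k+2) := by
        rw [hφ2, ha1, ha2, hr1, hr2, ha, hr]
        push_cast
        ring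
      rw [hφ1', hφ2', aux_two_block_real a r (ψf (2*k+1)) (ψf (2*k+2))]
      have hlip : a^2 + r^2 ≤ lam2^2 * (x1 - x2)^2 :=
        aux_lip_est lam2 hl2pos h2 x1 x2
      have hCsq : lam2^2 * (x1 - x2)^2 = C^2 * K^2 := by
        rw [hCdef, hx1, hx2, mul_pow, mul_pow, _root_.sq_abs]
        ring
      have hXpos : (0:ℝ) ≤ ‖ψf (2*k+1)‖^2 := sq_nonneg _
      have hYpos : (0:ℝ) ≤ ‖ψf (2*k+2)‖^2 := sq_nonneg _
      have e1 : K^2 ≤ ((2*k+1 : ℤ):ℝ)^2 := by rw [hK]; exact aux_sq1 k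
      have e2 : K^2 ≤ ((2*k+2 : ℤ):ℝ)^2 := by rw [hK]; exact aux_sq2 k
      have hstep1 : (a^2 + r^2) * (‖ψf (2*k+1)‖^2 + ‖ψf (2*k+2)‖^2)
          ≤ C^2 * K^2 * (‖ψf (2*k+1)‖^2 + ‖ψf (2*k+2)‖^2) := by
        apply mul_le_mul_of_nonneg_right _ (by positivity)
        rw [← hCsq]
        exact hlip
      have t1 : K^2 * ‖ψf (2*k+1)‖^2 ≤ ((2*k+1 : ℤ):ℝ)^2 * ‖ψf (2*k+1)‖^2 :=
        mul_le_mul_of_nonneg_right e1 hXpos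
      have t2 : K^2 * ‖ψf (2*k+2)‖^2 ≤ ((2*k+2 : ℤ):ℝ)^2 * ‖ψf (2*k+2)‖^2 :=
        mul_le_mul_of_nonneg_right e2 hYpos
      have hC2 : (0:ℝ) ≤ C^2 := sq_nonneg _
      have hstep2 := mul_le_mul_of_nonneg_left (add_le_add t1 t2) hC2
      calc (a^2 + r^2) * (‖ψf (2*k+1)‖^2 + ‖ψf (2*k+2)‖^2)
          ≤ C^2 * K^2 * (‖ψf (2*k+1)‖^2 + ‖ψf (2*k+2)‖^2) := hstep1
        _ = C^2 * (K^2 * ‖ψf (2*k+1)‖^2 + K^2 * ‖ψf (2*k+2)‖^2) := by ring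
        _ ≤ C^2 * (((2*k+1 : ℤ):ℝ)^2 * ‖ψf (2*k+1)‖^2
              + ((2*k+2 : ℤ):ℝ)^2 * ‖ψf (2*k+2)‖^2) := hstep2
  -- pair summabilities
  have sφpair : Summable (fun k : ℤ => ‖φ (2*k+1)‖^2 + ‖φ (2*k+2)‖^2) := by
    apply aux_summable_of_suppIn (|R| + 2)
    intro k hk
    have hz1 : φ (2*k+1) = 0 := by
      apply hsφ
      simp only [Int.abs_eq_natAbs] at hk ⊢
      omega
    have hz2 : φ (2*k+2) = 0 := by
      apply hsφ
      simp only [Int.abs_eq_natAbs] at hk ⊢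
      omega
    rw [hz1, hz2]
    simp
  have sXpair : Summable (fun k : ℤ =>
      C^2 * (((2*k+1 : ℤ):ℝ)^2 * ‖ψ (2*k+1)‖^2 + ((2*k+2 : ℤ):ℝ)^2 * ‖ψ (2*k+2)‖^2)) := by
    apply aux_summable_of_suppIn (|R| + 2)
    intro k hk
    have hz1 : ψ (2*k+1) = 0 := by
      apply hs
      simp only [Int.abs_eq_natAbs] at hk ⊢
      omega
    have hz2 : ψ (2*k+2) = 0 := by
      apply hs
      simp only [Int.abs_eq_natAbs] at hk ⊢
      omega
    rw [hz1, hz2]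
    simp
  -- combine
  have hsum2 : ∑' m : ℤ, ‖φ m‖^2 ≤ C^2 * ∑' m : ℤ, (m:ℝ)^2 * ‖ψ m‖^2 := by
    rw [aux_pair_tsum_shift _ sφ,
      aux_pair_tsum_shift (fun m : ℤ => (m:ℝ)^2 * ‖ψ m‖^2) sψX, ← tsum_mul_left]
    exact Summable.tsum_le_tsum (fun k => hblock k) sφpair sXpair
  have hdom : InDomX ψ := indom_of_suppIn hs
  have final_sq : ‖E1 ψ - E2 ψ‖^2 ≤ C^2 * ‖posX ψ‖^2 := by
    rw [hnormsq, hLiso, posX_norm_sq hdom]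
    exact hsum2
  have : ‖E1 ψ - E2 ψ‖^2 ≤ (C * ‖posX ψ‖)^2 := by
    rw [mul_pow]
    exact final_sq
  exact aux_norm_le_of_sq_le (mul_nonneg hC (norm_nonneg _)) this (norm_nonneg _)

end StepBound

/-- Fix `0 ≤ λ₁ < λ₂ < 1`.  For all `Φ₁, Φ₂, θ ∈ ℝ`, `β₀, β₁ ∈ 𝔻`, and every
positive integer `t`, writing `E_j = E_{Φ_j,θ,β₀,β₁}`, one has
`‖E₁ᵗδ₀ - E₂ᵗδ₀‖ ≤ 2πλ₂|Φ₁ - Φ₂|·∑_{s=0}^{t-1} ‖X E₂ˢ δ₀‖`. -/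
theorem stmt_12
    (lam1 lam2 : ℝ) (h1 : 0 ≤ lam1) (h12 : lam1 < lam2) (h2 : lam2 < 1)
    (Phi1 Phi2 theta : ℝ) (beta0 beta1 : ℂ) (hb0 : ‖beta0‖ < 1) (hb1 : ‖beta1‖ < 1)
    (E1 E2 : l2Z →L[ℂ] l2Z)
    (hE1 : IsECMV (uamoAlpha lam1 lam2 Phi1 theta beta0 beta1) E1)
    (hE2 : IsECMV (uamoAlpha lam1 lam2 Phi2 theta beta0 beta1) E2)
    (t : ℕ) (ht : 0 < t) :
    ‖(E1 ^ t) (deltaVec 0) - (E2 ^ t) (deltaVec 0)‖ ≤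
      2 * Real.pi * lam2 * |Phi1 - Phi2| *
        ∑ s ∈ Finset.range t, ‖posX ((E2 ^ s) (deltaVec 0))‖ := by
  set C : ℝ := 2 * Real.pi * lam2 * |Phi1 - Phi2| with hCdef
  have key : ∀ s : ℕ, ‖E1 ((E2 ^ s) (deltaVec 0)) - E2 ((E2 ^ s) (deltaVec 0))‖
      ≤ C * ‖posX ((E2 ^ s) (deltaVec 0))‖ := by
    intro s
    exact step_bound lam1 lam2 h1 h12 h2 Phi1 Phi2 theta beta0 beta1 hb0 hb1 E1 E2 hE1 hE2
      ((E2 ^ s) (deltaVec 0)) (2*s) (suppIn_pow hE2 s)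
  have main : ∀ T : ℕ, ‖(E1 ^ T) (deltaVec 0) - (E2 ^ T) (deltaVec 0)‖
      ≤ ∑ s ∈ Finset.range T, C * ‖posX ((E2 ^ s) (deltaVec 0))‖ := by
    intro T
    induction T with
    | zero => simp
    | succ T ih =>
        have hsplit : (E1 ^ (T+1)) (deltaVec 0) - (E2 ^ (T+1)) (deltaVec 0)
            = (E1 ((E1 ^ T) (deltaVec 0)) - E1 ((E2 ^ T) (deltaVec 0)))
              + (E1 ((E2 ^ T) (deltaVec 0)) - E2 ((E2 ^ T) (deltaVec 0))) := by
          rw [pow_succ', pow_succ', ContinuousLinearMap.mul_apply,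
            ContinuousLinearMap.mul_apply]
          abel
        rw [hsplit, Finset.sum_range_succ]
        refine le_trans (norm_add_le _ _) ?_
        have h1' : ‖E1 ((E1 ^ T) (deltaVec 0)) - E1 ((E2 ^ T) (deltaVec 0))‖
            = ‖(E1 ^ T) (deltaVec 0) - (E2 ^ T) (deltaVec 0)‖ := by
          rw [← map_sub, ContinuousLinearMap.norm_map_of_mem_unitary hE1.1]
        rw [h1']
        exact add_le_add ih (key T)
  calc ‖(E1 ^ t) (deltaVec 0) - (E2 ^ t) (deltaVec 0)‖
      ≤ ∑ s ∈ Finset.range t, C * ‖posX ((E2 ^ s) (deltaVec 0))‖ := main t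
    _ = C * ∑ s ∈ Finset.range t, ‖posX ((E2 ^ s) (deltaVec 0))‖ := by
        rw [Finset.mul_sum]

end
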